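/- Let G = (V,E) be a finite simple graph with n vertices and c connected components, and let v : E → ℝ satisfy −2 ≤ v_e ≤ 0 for every edge e. Then (−1)^n Z_G(q,v) > 0 for every real q < 0. Moreover, if −2 < v_e < 0 for every edge e, then the zero of the polynomial q ↦ Z_G(q,v) at q = 0 has multiplicity exactly c; that is, C_G^{[k]}(v) = 0 for 1 ≤ k < c and (−1)^{n−c} C_G^{[c]}(v) > 0. -/

import Mathlib

set_option linter.unusedSectionVars false


open Finset

/-- The number of connected components of the spanning subgraph of a finite graph
with edge set `A`. -/
noncomputable def numCompOfEdges {V : Type*} [Fintype V] (A : Finset (Sym2 V)) : ℕ :=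
  Nat.card (SimpleGraph.fromEdgeSet (A : Set (Sym2 V))).ConnectedComponent

/-- The multivariate Tutte polynomial `Z_G(q, v) = ∑_{A ⊆ E} q^{k(A)} ∏_{e ∈ A} v_e`. -/
noncomputable def tutteZ {V : Type*} [Fintype V] [DecidableEq V] (G : SimpleGraph V)
    [DecidableRel G.Adj] (q : ℝ) (v : Sym2 V → ℝ) : ℝ :=
  ∑ A ∈ G.edgeFinset.powerset, q ^ numCompOfEdges A * ∏ e ∈ A, v e

/-- The coefficient `C_G^{[k]}(v) = ∑_{A ⊆ E, k(A) = k} ∏_{e ∈ A} v_e` of `q^k` in the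
multivariate Tutte polynomial `Z_G(q,v)`. -/
noncomputable def tutteCoeff {V : Type*} [Fintype V] [DecidableEq V] (G : SimpleGraph V)
    [DecidableRel G.Adj] (k : ℕ) (v : Sym2 V → ℝ) : ℝ :=
  ∑ A ∈ G.edgeFinset.powerset.filter (fun A => numCompOfEdges A = k), ∏ e ∈ A, v e

namespace TutteAux

open SimpleGraph

variable {α : Type*} [Fintype α] [DecidableEq α]

abbrev gph (s : Finset (Sym2 α)) : SimpleGraph α := SimpleGraph.fromEdgeSet (s : Set (Sym2 α))

noncomputable def pc (F : Finset (Sym2 α)) : α → (gph F).ConnectedComponent :=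
  (gph F).connectedComponentMk

lemma pc_eq_iff {F : Finset (Sym2 α)} {u w : α} :
    pc F u = pc F w ↔ (gph F).Reachable u w := ConnectedComponent.eq

lemma reach_of_mem {s : Finset (Sym2 α)} {x y : α} (h : s(x, y) ∈ s) :
    (gph s).Reachable x y := by
  by_cases hxy : x = y
  · subst hxy; exact Reachable.refl _
  · exact Adj.reachable (by rw [fromEdgeSet_adj]; exact ⟨by exact_mod_cast h, hxy⟩)

lemma reachable_eq_of (s s' : Finset (Sym2 α)) (hss : s ⊆ s')
    (h : ∀ x y : α, s(x, y) ∈ s' → (gph s).Reachable x y) :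
    (gph s').Reachable = (gph s).Reachable := by
  funext u w
  refine propext ⟨?_, fun hr => hr.mono (fromEdgeSet_mono (by exact_mod_cast hss))⟩
  rintro ⟨p⟩
  induction p with
  | nil => exact Reachable.refl _
  | cons hadj p ih =>
    rw [fromEdgeSet_adj] at hadj
    exact (h _ _ (by exact_mod_cast hadj.1)).trans ih

lemma numComp_congr {s s' : Finset (Sym2 α)}
    (h : (gph s').Reachable = (gph s).Reachable) :
    numCompOfEdges s = numCompOfEdges s' :=
  Nat.card_congr (Quot.congr (Equiv.refl α)
    (fun a b => iff_of_eq (congrFun (congrFun h.symm a) b)))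



lemma reachable_insert_iff {x y : α} (hxy : x ≠ y) (s : Finset (Sym2 α)) (u w : α) :
    (gph (insert s(x, y) s)).Reachable u w ↔
      (gph s).Reachable u w ∨ ((gph s).Reachable u x ∧ (gph s).Reachable y w)
        ∨ ((gph s).Reachable u y ∧ (gph s).Reachable x w) := by
  constructor
  · rintro ⟨p⟩
    induction p with
    | nil => exact Or.inl (Reachable.refl _)
    | @cons ua ub uc hadj p ih =>
      rw [fromEdgeSet_adj] at hadj
      obtain ⟨hm, hne⟩ := hadj
      rw [Finset.coe_insert, Set.mem_insert_iff] at hm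
      have step : (gph s).Reachable ua ub ∨ ((gph s).Reachable ua x ∧ (gph s).Reachable y ub)
          ∨ ((gph s).Reachable ua y ∧ (gph s).Reachable x ub) := by
        rcases hm with he | hs
        · rcases Sym2.eq_iff.mp he with ⟨rfl, rfl⟩ | ⟨rfl, rfl⟩
          · exact Or.inr (Or.inl ⟨Reachable.refl _, Reachable.refl _⟩)
          · exact Or.inr (Or.inr ⟨Reachable.refl _, Reachable.refl _⟩)
        · exact Or.inl (Adj.reachable (by rw [fromEdgeSet_adj]; exact ⟨hs, hne⟩))
      rcases step with h1 | ⟨h1, h2⟩ | ⟨h1, h2⟩ <;>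
        rcases ih with g1 | ⟨g1, g2⟩ | ⟨g1, g2⟩
      · exact Or.inl (h1.trans g1)
      · exact Or.inr (Or.inl ⟨h1.trans g1, g2⟩)
      · exact Or.inr (Or.inr ⟨h1.trans g1, g2⟩)
      · exact Or.inr (Or.inl ⟨h1, h2.trans g1⟩)
      · exact Or.inr (Or.inl ⟨h1, g2⟩)
      · exact Or.inl (h1.trans g2)
      · exact Or.inr (Or.inr ⟨h1, h2.trans g1⟩)
      · exact Or.inl (h1.trans g2)
      · exact Or.inr (Or.inr ⟨h1, g2⟩)
  · have hle : gph s ≤ gph (insert s(x, y) s) := fromEdgeSet_mono (by simp)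
    have hadj : (gph (insert s(x, y) s)).Adj x y := by
      rw [fromEdgeSet_adj]; exact ⟨by simp, hxy⟩
    rintro (h | ⟨h1, h2⟩ | ⟨h1, h2⟩)
    · exact h.mono hle
    · exact ((h1.mono hle).trans hadj.reachable).trans (h2.mono hle)
    · exact ((h1.mono hle).trans hadj.symm.reachable).trans (h2.mono hle)

lemma numComp_insert_eq {x y : α} (s : Finset (Sym2 α)) (hxy : x ≠ y)
    (hnr : ¬ (gph s).Reachable x y) :
    numCompOfEdges s = numCompOfEdges (insert s(x, y) s) + 1 := by
  classical
  set G := gph s with hG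
  set G' := gph (insert s(x, y) s) with hG'
  have hle : G ≤ G' := fromEdgeSet_mono (by simp)
  let f : G.ConnectedComponent → G'.ConnectedComponent :=
    Quot.map id (fun a b hab => hab.mono hle)
  have fmk : ∀ u : α, f (G.connectedComponentMk u) = G'.connectedComponentMk u := fun u => rfl
  have key : ∀ u w : α, G'.Reachable u w ↔ G.Reachable u w ∨ (G.Reachable u x ∧ G.Reachable y w)
      ∨ (G.Reachable u y ∧ G.Reachable x w) := fun u w => reachable_insert_iff hxy s u w
  haveI : Fintype G.ConnectedComponent := Fintype.ofFinite _
  haveI : Fintype G'.ConnectedComponent := Fintype.ofFinite _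
  have hcard : ∀ c' : G'.ConnectedComponent,
      Fintype.card {c : G.ConnectedComponent // f c = c'} =
        if c' = f (G.connectedComponentMk x) then 2 else 1 := by
    intro c'
    obtain ⟨z, rfl⟩ := Quot.exists_rep c'
    have hz' : (Quot.mk G'.Reachable z : G'.ConnectedComponent) = G'.connectedComponentMk z := rfl
    rw [hz']
    by_cases hz : G'.Reachable z x
    · have hc'p : G'.connectedComponentMk z = f (G.connectedComponentMk x) := by
        rw [fmk]; exact ConnectedComponent.eq.mpr hz
      rw [if_pos hc'p]
      rw [← Nat.card_eq_fintype_card]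
      apply Nat.card_eq_two_iff.mpr
      refine ⟨⟨G.connectedComponentMk x, ?_⟩, ⟨G.connectedComponentMk y, ?_⟩, ?_, ?_⟩
      · rw [fmk]; exact ConnectedComponent.eq.mpr hz.symm
      · rw [fmk]
        exact ConnectedComponent.eq.mpr ((Adj.reachable (by
          rw [hG', fromEdgeSet_adj]; exact ⟨by simp, hxy⟩)).symm.trans hz.symm)
      · intro hcon
        rw [Subtype.mk_eq_mk] at hcon
        exact hnr (ConnectedComponent.eq.mp hcon)
      · apply Set.eq_univ_iff_forall.mpr
        rintro ⟨c, hc⟩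
        obtain ⟨u, rfl⟩ := Quot.exists_rep c
        have hc2 : G'.Reachable u x := by
          have : G'.Reachable u z := ConnectedComponent.eq.mp (hc : _)
          exact this.trans hz
        simp only [Set.mem_insert_iff, Set.mem_singleton_iff, Subtype.mk_eq_mk]
        rcases (key u x).mp hc2 with h | ⟨h1, _⟩ | ⟨h1, _⟩
        · exact Or.inl (Subtype.ext (ConnectedComponent.sound h))
        · exact Or.inl (Subtype.ext (ConnectedComponent.sound h1))
        · exact Or.inr (Subtype.ext (ConnectedComponent.sound h1))
    · have hc'p : G'.connectedComponentMk z ≠ f (G.connectedComponentMk x) := by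
        rw [fmk]
        exact fun hcon => hz (ConnectedComponent.eq.mp hcon)
      rw [if_neg hc'p]
      apply Fintype.card_eq_one_iff.mpr
      have hmem : f (G.connectedComponentMk z) = G'.connectedComponentMk z := fmk z
      refine ⟨⟨G.connectedComponentMk z, hmem⟩, ?_⟩
      rintro ⟨c, hc⟩
      obtain ⟨u, rfl⟩ := Quot.exists_rep c
      apply Subtype.ext
      have hru : G'.Reachable u z := ConnectedComponent.eq.mp (hc : _)
      have hadj' : G'.Adj x y := by rw [hG', fromEdgeSet_adj]; exact ⟨by simp, hxy⟩
      rcases (key u z).mp hru with h | ⟨_, h2⟩ | ⟨_, h2⟩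
      · exact ConnectedComponent.sound h
      · exact absurd ((h2.mono hle).symm.trans hadj'.symm.reachable) hz
      · exact absurd ((h2.mono hle).symm) hz
  have hsum : Fintype.card G.ConnectedComponent = Fintype.card G'.ConnectedComponent + 1 := by
    calc Fintype.card G.ConnectedComponent
        = Fintype.card (Σ c' : G'.ConnectedComponent, {c : G.ConnectedComponent // f c = c'}) :=
          (Fintype.card_congr (Equiv.sigmaFiberEquiv f)).symm
      _ = ∑ c' : G'.ConnectedComponent, Fintype.card {c : G.ConnectedComponent // f c = c'} :=
          Fintype.card_sigma
      _ = ∑ c' : G'.ConnectedComponent,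
            (1 + if c' = f (G.connectedComponentMk x) then 1 else 0) := by
          refine Finset.sum_congr rfl fun c' _ => ?_
          rw [hcard c']; split <;> rfl
      _ = Fintype.card G'.ConnectedComponent + 1 := by
          rw [Finset.sum_add_distrib, Finset.sum_const, Finset.sum_ite_eq' Finset.univ]
          rw [if_pos (Finset.mem_univ _), smul_eq_mul, mul_one, Finset.card_univ]
  show Nat.card G.ConnectedComponent = Nat.card G'.ConnectedComponent + 1
  rw [Nat.card_eq_fintype_card, Nat.card_eq_fintype_card, hsum]



noncomputable def cf (E F : Finset (Sym2 α)) (k : ℕ) (v : Sym2 α → ℝ) : ℝ :=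
  ∑ A ∈ E.powerset, if numCompOfEdges (A ∪ F) = k then ∏ a ∈ A, v a else 0

lemma cf_empty (F : Finset (Sym2 α)) (k : ℕ) (v : Sym2 α → ℝ) :
    cf ∅ F k v = if numCompOfEdges F = k then 1 else 0 := by
  simp [cf]

lemma cf_deletion_contraction {E : Finset (Sym2 α)} (F : Finset (Sym2 α)) {e : Sym2 α}
    (he : e ∈ E) (k : ℕ) (v : Sym2 α → ℝ) :
    cf E F k v = cf (E.erase e) F k v + v e * cf (E.erase e) (insert e F) k v := by
  conv_lhs => rw [cf, ← Finset.insert_erase he]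
  rw [Finset.sum_powerset_insert (Finset.notMem_erase e E)]
  congr 1
  rw [cf, Finset.mul_sum]
  apply Finset.sum_congr rfl
  intro A hA
  have heA : e ∉ A := fun h => Finset.notMem_erase e E (Finset.mem_powerset.mp hA h)
  have hAF : insert e A ∪ F = A ∪ insert e F := by
    ext z; simp only [Finset.mem_union, Finset.mem_insert]; tauto
  rw [Finset.prod_insert heA, hAF, mul_ite, mul_zero]
lemma numComp_insert_parallel {F X : Finset (Sym2 α)} (hFX : F ⊆ X) {a b : Sym2 α}
    (haX : a ∈ X) (hand : ¬ (Sym2.map (pc F) a).IsDiag)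
    (hab : Sym2.map (pc F) a = Sym2.map (pc F) b) :
    numCompOfEdges X = numCompOfEdges (insert b X) := by
  apply numComp_congr
  apply reachable_eq_of X (insert b X) (Finset.subset_insert b X)
  intro x y hxy
  rw [Finset.mem_insert] at hxy
  rcases hxy with heq | hmem
  · obtain ⟨a1, a2, ha⟩ := Sym2.exists.mp ⟨a, rfl⟩
    subst ha
    rw [← heq] at hab
    rw [Sym2.map_pair_eq, Sym2.map_pair_eq] at hab
    have hmono : ∀ u w : α, (gph F).Reachable u w → (gph X).Reachable u w :=
      fun u w h => h.mono (fromEdgeSet_mono (by exact_mod_cast hFX))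
    have hreach : (gph X).Reachable a1 a2 := reach_of_mem haX
    rcases Sym2.eq_iff.mp hab with ⟨h1, h2⟩ | ⟨h1, h2⟩
    · exact ((hmono _ _ (pc_eq_iff.mp h1)).symm.trans hreach).trans
        (hmono _ _ (pc_eq_iff.mp h2))
    · exact ((hmono _ _ (pc_eq_iff.mp h2)).symm.trans hreach.symm).trans
        (hmono _ _ (pc_eq_iff.mp h1))
  · exact reach_of_mem hmem

lemma numComp_parallel_trio {F X : Finset (Sym2 α)} (hFX : F ⊆ X) {a b : Sym2 α}
    (hand : ¬ (Sym2.map (pc F) a).IsDiag)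
    (hab : Sym2.map (pc F) a = Sym2.map (pc F) b) :
    numCompOfEdges (insert b X) = numCompOfEdges (insert a X) ∧
    numCompOfEdges (insert a (insert b X)) = numCompOfEdges (insert a X) := by
  have hbnd : ¬ (Sym2.map (pc F) b).IsDiag := by rw [← hab]; exact hand
  have h1 : numCompOfEdges (insert a X) = numCompOfEdges (insert b (insert a X)) :=
    numComp_insert_parallel (hFX.trans (Finset.subset_insert a X))
      (Finset.mem_insert_self a X) hand hab
  have h2 : numCompOfEdges (insert b X) = numCompOfEdges (insert a (insert b X)) :=
    numComp_insert_parallel (hFX.trans (Finset.subset_insert b X))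
      (Finset.mem_insert_self b X) hbnd hab.symm
  have hcomm : insert a (insert b X) = insert b (insert a X) := Finset.insert_comm a b X
  refine ⟨?_, ?_⟩
  · rw [h2, hcomm, ← h1]
  · rw [hcomm, ← h1]

lemma cf_merge {E : Finset (Sym2 α)} (F : Finset (Sym2 α)) {a b : Sym2 α}
    (haE : a ∈ E) (hbE : b ∈ E) (hne : a ≠ b)
    (hand : ¬ (Sym2.map (pc F) a).IsDiag)
    (hab : Sym2.map (pc F) a = Sym2.map (pc F) b) (k : ℕ) (v : Sym2 α → ℝ) :
    cf E F k v = cf (E.erase b) F k (Function.update v a (v a + v b + v a * v b)) := by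
  have haE' : a ∈ E.erase b := Finset.mem_erase.mpr ⟨hne, haE⟩
  set E₂ := (E.erase b).erase a with hE₂
  have haE₂ : a ∉ E₂ := Finset.notMem_erase a _
  have hbE₂ : b ∉ insert a E₂ := by
    rw [Finset.mem_insert]
    rintro (h | h)
    · exact hne h.symm
    · exact Finset.notMem_erase b E (Finset.mem_of_mem_erase h)
  have hEb : E.erase b = insert a E₂ := (Finset.insert_erase haE').symm
  have hE : E = insert b (insert a E₂) := by rw [← hEb, Finset.insert_erase hbE]
  conv_lhs => rw [cf, hE]
  rw [Finset.sum_powerset_insert hbE₂]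
  rw [Finset.sum_powerset_insert haE₂, Finset.sum_powerset_insert haE₂]
  conv_rhs => rw [cf, hEb, Finset.sum_powerset_insert haE₂]
  rw [← Finset.sum_add_distrib, ← Finset.sum_add_distrib, ← Finset.sum_add_distrib,
    ← Finset.sum_add_distrib]
  apply Finset.sum_congr rfl
  intro A hA
  rw [Finset.mem_powerset] at hA
  have haA : a ∉ A := fun h => haE₂ (hA h)
  have hbA : b ∉ A := fun h => Finset.notMem_erase b E (Finset.mem_of_mem_erase (hA h))
  have hbaA : b ∉ insert a A := by
    rw [Finset.mem_insert]; rintro (h | h); exacts [hne h.symm, hbA h]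
  -- products
  have hupd : ∀ x ∈ A, Function.update v a (v a + v b + v a * v b) x = v x :=
    fun x hx => Function.update_of_ne (fun h : x = a => haA (h ▸ hx)) _ v
  have hprodA : ∏ x ∈ A, Function.update v a (v a + v b + v a * v b) x = ∏ x ∈ A, v x :=
    Finset.prod_congr rfl hupd
  -- conditions
  have trio := numComp_parallel_trio (X := A ∪ F) Finset.subset_union_right hand hab
  have hc1 : insert a A ∪ F = insert a (A ∪ F) := Finset.insert_union a A F
  have hc2 : insert b A ∪ F = insert b (A ∪ F) := Finset.insert_union b A F
  have hc3 : insert b (insert a A) ∪ F = insert a (insert b (A ∪ F)) := by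
    rw [Finset.insert_union, Finset.insert_union, Finset.insert_comm]
  rw [hc1, hc2, hc3, trio.1, trio.2]
  rw [Finset.prod_insert haA, Finset.prod_insert hbA, Finset.prod_insert hbaA,
    Finset.prod_insert haA, Finset.prod_insert haA, hprodA,
    Function.update_self]
  split_ifs with h1 h2 <;> ring

lemma neg_one_pow_even (m : ℕ) : (-1:ℝ)^(m+m) = 1 := by
  rw [← two_mul, pow_mul]; norm_num

lemma veff_bounds {va vb : ℝ} (h1 : -2 ≤ va) (h2 : va ≤ 0) (h3 : -2 ≤ vb) (h4 : vb ≤ 0) :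
    -2 ≤ va + vb + va * vb ∧ va + vb + va * vb ≤ 0 := by
  constructor <;>
    nlinarith [mul_nonneg (by linarith : (0:ℝ) ≤ va + 2) (by linarith : (0:ℝ) ≤ vb + 2),
      mul_nonneg (by linarith : (0:ℝ) ≤ -va) (by linarith : (0:ℝ) ≤ -vb),
      mul_nonneg (by linarith : (0:ℝ) ≤ va + 2) (by linarith : (0:ℝ) ≤ -vb),
      mul_nonneg (by linarith : (0:ℝ) ≤ -va) (by linarith : (0:ℝ) ≤ vb + 2)]

lemma veff_bounds_strict {va vb : ℝ} (h1 : -2 < va) (h2 : va < 0) (h3 : -2 < vb) (h4 : vb < 0) :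
    -2 < va + vb + va * vb ∧ va + vb + va * vb < 0 := by
  constructor <;>
    nlinarith [mul_pos (by linarith : (0:ℝ) < va + 2) (by linarith : (0:ℝ) < vb + 2),
      mul_pos (by linarith : (0:ℝ) < -va) (by linarith : (0:ℝ) < -vb),
      mul_pos (by linarith : (0:ℝ) < va + 2) (by linarith : (0:ℝ) < -vb),
      mul_pos (by linarith : (0:ℝ) < -va) (by linarith : (0:ℝ) < vb + 2)]

lemma main_base (F : Finset (Sym2 α)) (v : Sym2 α → ℝ) :
    (∀ k, 0 ≤ (-1:ℝ)^(numCompOfEdges F + k) * cf (∅ : Finset (Sym2 α)) F k v) ∧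
    (0 < (-1:ℝ)^(numCompOfEdges F + numCompOfEdges ((∅ : Finset (Sym2 α)) ∪ F)) *
      cf (∅ : Finset (Sym2 α)) F (numCompOfEdges ((∅ : Finset (Sym2 α)) ∪ F)) v) := by
  constructor
  · intro k
    rw [cf_empty]
    split_ifs with h
    · rw [mul_one, ← h, neg_one_pow_even]; exact zero_le_one
    · rw [mul_zero]
  · rw [Finset.empty_union, cf_empty, if_pos rfl, mul_one, neg_one_pow_even]; exact one_pos

lemma main_pos (N : ℕ) : ∀ (E F : Finset (Sym2 α)) (v : Sym2 α → ℝ), E.card ≤ N →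
    (∀ a ∈ E, ¬ (Sym2.map (pc F) a).IsDiag) →
    (∀ a ∈ E, -2 ≤ v a ∧ v a ≤ 0) →
    (∀ k, 0 ≤ (-1:ℝ) ^ (numCompOfEdges F + k) * cf E F k v) ∧
    ((∀ a ∈ E, -2 < v a ∧ v a < 0) →
      0 < (-1:ℝ) ^ (numCompOfEdges F + numCompOfEdges (E ∪ F)) *
        cf E F (numCompOfEdges (E ∪ F)) v) := by
  induction N with
  | zero =>
    intro E F v hcard _ _
    have hE : E = ∅ := Finset.card_eq_zero.mp (Nat.le_zero.mp hcard)
    subst hE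
    exact ⟨(main_base F v).1, fun _ => (main_base F v).2⟩
  | succ N ih =>
    intro E F v hcard hloops hbounds
    rcases Finset.eq_empty_or_nonempty E with hE | hEne
    · subst hE
      exact ⟨(main_base F v).1, fun _ => (main_base F v).2⟩
    by_cases hpar : ∃ a ∈ E, ∃ b ∈ E, a ≠ b ∧ Sym2.map (pc F) a = Sym2.map (pc F) b
    · -- merge a parallel pair
      obtain ⟨a, haE, b, hbE, hne, hab⟩ := hpar
      have hand := hloops a haE
      have hcard' : (E.erase b).card ≤ N := by
        rw [Finset.card_erase_of_mem hbE]
        have := Finset.card_pos.mpr hEne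
        omega
      have hloops' : ∀ x ∈ E.erase b, ¬ (Sym2.map (pc F) x).IsDiag :=
        fun x hx => hloops x (Finset.mem_of_mem_erase hx)
      have hvb := hbounds b hbE
      have hva := hbounds a haE
      have hbounds' : ∀ x ∈ E.erase b,
          -2 ≤ Function.update v a (v a + v b + v a * v b) x ∧
            Function.update v a (v a + v b + v a * v b) x ≤ 0 := by
        intro x hx
        by_cases hxa : x = a
        · subst hxa
          rw [Function.update_self]
          exact veff_bounds hva.1 hva.2 hvb.1 hvb.2
        · rw [Function.update_of_ne hxa]
          exact hbounds x (Finset.mem_of_mem_erase hx)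
      have hcfeq : ∀ k, cf E F k v =
          cf (E.erase b) F k (Function.update v a (v a + v b + v a * v b)) :=
        fun k => cf_merge F haE hbE hne hand hab k v
      have haE' : a ∈ E.erase b := Finset.mem_erase.mpr ⟨hne, haE⟩
      have hcompeq : numCompOfEdges (E ∪ F) = numCompOfEdges ((E.erase b) ∪ F) := by
        have hbu : E ∪ F = insert b ((E.erase b) ∪ F) := by
          rw [← Finset.insert_union, Finset.insert_erase hbE]
        rw [hbu]
        exact (numComp_insert_parallel (F := F) (X := (E.erase b) ∪ F)
          Finset.subset_union_right (Finset.mem_union_left _ haE') hand hab).symm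
      obtain ⟨ihw, ihs⟩ := ih (E.erase b) F _ hcard' hloops' hbounds'
      constructor
      · intro k; rw [hcfeq k]; exact ihw k
      · intro hstrict
        have hva' := hstrict a haE
        have hvb' := hstrict b hbE
        have hstrict' : ∀ x ∈ E.erase b,
            -2 < Function.update v a (v a + v b + v a * v b) x ∧
              Function.update v a (v a + v b + v a * v b) x < 0 := by
          intro x hx
          by_cases hxa : x = a
          · subst hxa
            rw [Function.update_self]
            exact veff_bounds_strict hva'.1 hva'.2 hvb'.1 hvb'.2
          · rw [Function.update_of_ne hxa]
            exact hstrict x (Finset.mem_of_mem_erase hx)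
        rw [hcompeq, hcfeq]
        exact ihs hstrict'
    · -- deletion-contraction
      push_neg at hpar
      obtain ⟨e, heE⟩ := hEne
      have hend := hloops e heE
      obtain ⟨x, y, hxy_eq⟩ := Sym2.exists.mp ⟨e, rfl⟩
      subst hxy_eq
      rw [Sym2.map_pair_eq] at hend
      have hpcxy : pc F x ≠ pc F y := fun h => hend (Sym2.mk_isDiag_iff.mpr h)
      have hxy : x ≠ y := fun h => hpcxy (by rw [h])
      have hnr : ¬ (gph F).Reachable x y := fun h => hpcxy (pc_eq_iff.mpr h)
      have hcount : numCompOfEdges F = numCompOfEdges (insert s(x,y) F) + 1 :=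
        numComp_insert_eq F hxy hnr
      have hcard' : (E.erase s(x,y)).card ≤ N := by
        rw [Finset.card_erase_of_mem heE]
        have : 0 < E.card := Finset.card_pos.mpr ⟨_, heE⟩
        omega
      have hloopsdel : ∀ a ∈ E.erase s(x,y), ¬ (Sym2.map (pc F) a).IsDiag :=
        fun a ha => hloops a (Finset.mem_of_mem_erase ha)
      have hboundsdel : ∀ a ∈ E.erase s(x,y), -2 ≤ v a ∧ v a ≤ 0 :=
        fun a ha => hbounds a (Finset.mem_of_mem_erase ha)
      have hloops' : ∀ a ∈ E.erase s(x,y), ¬ (Sym2.map (pc (insert s(x,y) F)) a).IsDiag := by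
        intro a ha hdiag
        obtain ⟨a1, a2, ha12⟩ := Sym2.exists.mp ⟨a, rfl⟩
        subst ha12
        rw [Sym2.map_pair_eq, Sym2.mk_isDiag_iff] at hdiag
        have hreach' : (gph (insert s(x,y) F)).Reachable a1 a2 := pc_eq_iff.mp hdiag
        have haE2 : s(a1,a2) ∈ E := Finset.mem_of_mem_erase ha
        have hane : s(a1,a2) ≠ s(x,y) := (Finset.mem_erase.mp ha).1
        rcases (reachable_insert_iff hxy F a1 a2).mp hreach' with h | ⟨h1, h2⟩ | ⟨h1, h2⟩
        · refine hloops _ haE2 ?_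
          rw [Sym2.map_pair_eq, Sym2.mk_isDiag_iff]
          exact pc_eq_iff.mpr h
        · apply hpar _ haE2 _ heE hane
          rw [Sym2.map_pair_eq, Sym2.map_pair_eq, pc_eq_iff.mpr h1, pc_eq_iff.mpr h2.symm]
        · apply hpar _ haE2 _ heE hane
          rw [Sym2.map_pair_eq, Sym2.map_pair_eq, pc_eq_iff.mpr h1, pc_eq_iff.mpr h2.symm,
            Sym2.eq_swap]
      obtain ⟨ih1w, _⟩ := ih (E.erase s(x,y)) F v hcard' hloopsdel hboundsdel
      obtain ⟨ih2w, ih2s⟩ := ih (E.erase s(x,y)) (insert s(x,y) F) v hcard' hloops' hboundsdel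
      have hve := hbounds _ heE
      have hdc : ∀ k, cf E F k v = cf (E.erase s(x,y)) F k v +
          v s(x,y) * cf (E.erase s(x,y)) (insert s(x,y) F) k v :=
        fun k => cf_deletion_contraction F heE k v
      have hsgn : ∀ k, (-1:ℝ) ^ (numCompOfEdges F + k) =
          -((-1:ℝ) ^ (numCompOfEdges (insert s(x,y) F) + k)) := by
        intro k
        rw [hcount, show numCompOfEdges (insert s(x,y) F) + 1 + k =
          (numCompOfEdges (insert s(x,y) F) + k) + 1 from by ring, pow_succ]
        ring
      constructor
      · intro k
        rw [hdc k, mul_add, hsgn k]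
        have h1 := ih1w k
        rw [hsgn k] at h1
        have h2 := ih2w k
        nlinarith [mul_nonneg (neg_nonneg.mpr hve.2) h2]
      · intro hstrict
        have hstrictdel : ∀ a ∈ E.erase s(x,y), -2 < v a ∧ v a < 0 :=
          fun a ha => hstrict a (Finset.mem_of_mem_erase ha)
        have hsetEq : (E.erase s(x,y)) ∪ insert s(x,y) F = E ∪ F := by
          ext z
          simp only [Finset.mem_union, Finset.mem_erase, Finset.mem_insert]
          constructor
          · rintro (⟨_, h⟩ | (rfl | h))
            · exact Or.inl h
            · exact Or.inl heE
            · exact Or.inr h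
          · rintro (h | h)
            · by_cases hz : z = s(x,y)
              · exact Or.inr (Or.inl hz)
              · exact Or.inl ⟨hz, h⟩
            · exact Or.inr (Or.inr h)
        have hs2 := ih2s hstrictdel
        rw [hsetEq] at hs2
        set c := numCompOfEdges (E ∪ F)
        have h1 := ih1w c
        rw [hsgn c] at h1
        have hvelt := (hstrict _ heE).2
        rw [hdc c, mul_add, hsgn c]
        nlinarith [mul_pos (neg_pos.mpr hvelt) hs2]
lemma mk_surjective (s : Finset (Sym2 α)) :
    Function.Surjective ((gph s).connectedComponentMk) := fun c => Quot.exists_rep c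

lemma numComp_le (s : Finset (Sym2 α)) : numCompOfEdges s ≤ Fintype.card α := by
  rw [← Nat.card_eq_fintype_card]
  exact Nat.card_le_card_of_surjective _ (mk_surjective s)

lemma numComp_mono {s t : Finset (Sym2 α)} (hst : s ⊆ t) :
    numCompOfEdges t ≤ numCompOfEdges s := by
  have hle : gph s ≤ gph t := fromEdgeSet_mono (by exact_mod_cast hst)
  apply Nat.card_le_card_of_surjective
    (Quot.map (fun u : α => u) (fun a b hab => hab.mono hle))
  intro c
  obtain ⟨u, rfl⟩ := Quot.exists_rep c
  exact ⟨Quot.mk _ u, rfl⟩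

lemma gph_empty : gph (∅ : Finset (Sym2 α)) = ⊥ := by
  ext u w
  simp [fromEdgeSet_adj]

lemma numComp_empty : numCompOfEdges (∅ : Finset (Sym2 α)) = Fintype.card α := by
  show Nat.card (gph (∅ : Finset (Sym2 α))).ConnectedComponent = _
  rw [gph_empty, ← Nat.card_eq_fintype_card]
  refine Nat.card_congr (Equiv.ofBijective
    (fun u : α => (⊥ : SimpleGraph α).connectedComponentMk u) ⟨?_, ?_⟩).symm
  · intro u w h
    exact reachable_bot.mp (ConnectedComponent.eq.mp h)
  · exact fun c => Quot.exists_rep c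

lemma loops_empty (a : Sym2 α) (ha : ¬ a.IsDiag) :
    ¬ (Sym2.map (pc (∅ : Finset (Sym2 α))) a).IsDiag := by
  obtain ⟨u, w, huw⟩ := Sym2.exists.mp ⟨a, rfl⟩
  subst huw
  rw [Sym2.map_pair_eq, Sym2.mk_isDiag_iff]
  rw [Sym2.mk_isDiag_iff] at ha
  intro h
  have := pc_eq_iff.mp h
  rw [gph_empty] at this
  exact ha (reachable_bot.mp this)

lemma eq_empty_of_numComp_eq {A : Finset (Sym2 α)} (hnd : ∀ a ∈ A, ¬ a.IsDiag)
    (h : numCompOfEdges A = Fintype.card α) : A = ∅ := by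
  by_contra hne
  obtain ⟨a, ha⟩ := Finset.nonempty_iff_ne_empty.mpr hne
  obtain ⟨u, w, huw⟩ := Sym2.exists.mp ⟨a, rfl⟩
  subst huw
  have huw' : u ≠ w := fun hc => hnd _ ha (Sym2.mk_isDiag_iff.mpr hc)
  have hadj : (gph A).Adj u w := by
    rw [fromEdgeSet_adj]; exact ⟨by exact_mod_cast ha, huw'⟩
  haveI : Fintype (gph A).ConnectedComponent := Fintype.ofFinite _
  have hcards : Fintype.card (gph A).ConnectedComponent = Fintype.card α := by
    rw [← Nat.card_eq_fintype_card]; exact h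
  have hbij : Function.Bijective ((gph A).connectedComponentMk) :=
    (Fintype.bijective_iff_surjective_and_card _).mpr ⟨mk_surjective A, hcards.symm⟩
  exact huw' (hbij.1 (ConnectedComponent.sound hadj.reachable))

end TutteAux

/-- For a finite simple graph `G` with `n` vertices and `c` components and edge weights
`-2 ≤ v_e ≤ 0`:  `(-1)^n Z_G(q,v) > 0` for every real `q < 0`.  Moreover, if
`-2 < v_e < 0` for every edge, then the zero of `q ↦ Z_G(q,v)` at `q = 0` has
multiplicity exactly `c`, i.e. `C_G^{[k]}(v) = 0` for `1 ≤ k < c` and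
`(-1)^{n-c} C_G^{[c]}(v) > 0`. -/
theorem tutteZ_pos_of_neg_q {V : Type*} [Fintype V] [DecidableEq V]
    (G : SimpleGraph V) [DecidableRel G.Adj] (v : Sym2 V → ℝ)
    (n c : ℕ) (hn : n = Fintype.card V) (hc : c = Nat.card G.ConnectedComponent)
    (hv : ∀ e ∈ G.edgeFinset, -2 ≤ v e ∧ v e ≤ 0) :
    (∀ q : ℝ, q < 0 → 0 < (-1 : ℝ) ^ n * tutteZ G q v) ∧
    ((∀ e ∈ G.edgeFinset, -2 < v e ∧ v e < 0) →
      (∀ k, 1 ≤ k → k < c → tutteCoeff G k v = 0) ∧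
      0 < (-1 : ℝ) ^ ((n : ℤ) - c) * tutteCoeff G c v) := by
  classical
  subst hn hc
  set n := Fintype.card V with hn
  set E := G.edgeFinset with hE
  have hloops0 : ∀ a ∈ E, ¬ (Sym2.map (TutteAux.pc (∅ : Finset (Sym2 V))) a).IsDiag :=
    fun a ha => TutteAux.loops_empty a (SimpleGraph.not_isDiag_of_mem_edgeFinset ha)
  have hmain := TutteAux.main_pos E.card E ∅ v le_rfl hloops0 hv
  have hcoeff : ∀ k, tutteCoeff G k v = TutteAux.cf E ∅ k v := by
    intro k
    rw [tutteCoeff, TutteAux.cf, Finset.sum_filter]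
    apply Finset.sum_congr rfl
    intro A _
    rw [Finset.union_empty]
  have hF0 : numCompOfEdges (∅ : Finset (Sym2 V)) = n := TutteAux.numComp_empty
  have hGE : SimpleGraph.fromEdgeSet (↑G.edgeFinset : Set (Sym2 V)) = G := by
    rw [SimpleGraph.coe_edgeFinset, SimpleGraph.fromEdgeSet_edgeSet]
  have hcG : numCompOfEdges E = Nat.card G.ConnectedComponent :=
    congrArg (fun (H : SimpleGraph V) => Nat.card H.ConnectedComponent) hGE
  have hweak : ∀ k, 0 ≤ (-1:ℝ) ^ (n + k) * tutteCoeff G k v := by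
    intro k
    rw [hcoeff k]
    have := hmain.1 k
    rwa [hF0] at this
  constructor
  · intro q hq
    have hZ : tutteZ G q v = ∑ k ∈ Finset.range (n+1), q ^ k * tutteCoeff G k v := by
      rw [tutteZ, ← Finset.sum_fiberwise_of_maps_to (g := numCompOfEdges)
        (t := Finset.range (n+1))
        (fun A _ => Finset.mem_range.mpr (Nat.lt_succ_of_le (TutteAux.numComp_le A)))
        (fun A => q ^ numCompOfEdges A * ∏ e ∈ A, v e)]
      apply Finset.sum_congr rfl
      intro k _
      rw [tutteCoeff, Finset.mul_sum]
      apply Finset.sum_congr rfl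
      intro A hA
      rw [(Finset.mem_filter.mp hA).2]
    rw [hZ, Finset.mul_sum]
    apply Finset.sum_pos' ?_ ⟨n, Finset.self_mem_range_succ n, ?_⟩
    · intro k _
      have hkey : (-1:ℝ)^n * (q^k * tutteCoeff G k v) =
          (-q)^k * ((-1:ℝ)^(n+k) * tutteCoeff G k v) := by
        have h2 : (-1:ℝ)^k * ((-1:ℝ)^(n+k)) = (-1:ℝ)^n := by
          rw [← pow_add, show k+(n+k) = n + 2*k from by ring, pow_add, pow_mul]
          norm_num
        rw [neg_pow q k, ← h2]
        ring
      rw [hkey]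
      exact mul_nonneg (pow_nonneg (by linarith) k) (hweak k)
    · have hfilter : E.powerset.filter (fun A => numCompOfEdges A = n) = {∅} := by
        ext A
        simp only [Finset.mem_filter, Finset.mem_powerset, Finset.mem_singleton]
        constructor
        · rintro ⟨hsub, hnum⟩
          exact TutteAux.eq_empty_of_numComp_eq
            (fun a ha => SimpleGraph.not_isDiag_of_mem_edgeFinset (hsub ha)) hnum
        · rintro rfl
          exact ⟨Finset.empty_subset _, TutteAux.numComp_empty⟩
      have hCn : tutteCoeff G n v = 1 := by
        rw [tutteCoeff, hfilter, Finset.sum_singleton, Finset.prod_empty]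
      have : (-1:ℝ)^n * (q^n * tutteCoeff G n v) = (-q)^n := by
        rw [hCn, neg_pow q n]; ring
      rw [this]
      exact pow_pos (by linarith) n
  · intro hstrict
    constructor
    · intro k hk1 hkc
      rw [tutteCoeff]
      apply Finset.sum_eq_zero
      intro A hA
      obtain ⟨hsub, hnum⟩ := Finset.mem_filter.mp hA
      rw [Finset.mem_powerset] at hsub
      have hge : Nat.card G.ConnectedComponent ≤ numCompOfEdges A := by
        rw [← hcG]; exact TutteAux.numComp_mono hsub
      exact absurd hnum (by omega)
    · have hs := hmain.2 hstrict
      rw [hF0, Finset.union_empty, hcG, ← hcoeff] at hs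
      have hzp : ((-1:ℝ)) ^ ((n : ℤ) - (Nat.card G.ConnectedComponent : ℤ)) =
          (-1:ℝ) ^ (n + Nat.card G.ConnectedComponent) := by
        set c' := Nat.card G.ConnectedComponent
        rw [show (n : ℤ) - (c' : ℤ) = ((n + c' : ℕ) : ℤ) - 2 * (c' : ℤ) from by push_cast; ring,
          zpow_sub₀ (by norm_num : (-1:ℝ) ≠ 0), zpow_mul]
        norm_num
        rw [show ((n:ℤ) + (c':ℤ)) = ((n + c' : ℕ) : ℤ) from by push_cast; ring, zpow_natCast]
      rw [hzp]
      exact hs
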